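/- Let X be an irreducible affine variety over an algebraically closed field k and x ∈ X. Every prime ideal p of the local ring O_{X,x} admits a 'generic point' in the following sense of finite intersection property: for any finitely many f_1,...,f_r ∈ p, g_1,...,g_s ∉ p, and open U ∋ x, there exists y ∈ U with f_i(y) = 0 for all i and g_j(y) ≠ 0 for all j. -/

import Mathlib

open MvPolynomial

/-- Generic points for prime ideals of the local ring of an irreducible affine variety, in
finite-intersection-property form.  Here `X = V(J) ⊆ k^n` is an irreducible affine variety
(`J` prime), `x ∈ X`, and a prime ideal of `O_{X,x}` is encoded by a prime ideal `q` with
`J ≤ q` contained in the maximal ideal `m_x` of `x` (i.e. all elements of `q` vanish at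
`x`).  For any finitely many `f ∈ F ⊆ q` and `g ∈ G` with `g ∉ q` (the latter encode both
the functions `g_j ∉ p` and a basic open neighbourhood `U ∋ x`), there is a point `y ∈ X`
with `f(y) = 0` for all `f ∈ F` and `g(y) ≠ 0` for all `g ∈ G`. -/
theorem generic_point_fip {k : Type*} [Field k] [IsAlgClosed k] {n : ℕ}
    (J : Ideal (MvPolynomial (Fin n) k)) (hJ : J.IsPrime)
    (x : Fin n → k) (hxJ : ∀ f ∈ J, eval x f = 0)
    (q : Ideal (MvPolynomial (Fin n) k)) (hq : q.IsPrime)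
    (hJq : J ≤ q) (hqx : ∀ f ∈ q, eval x f = 0)
    (F G : Finset (MvPolynomial (Fin n) k))
    (hF : ∀ f ∈ F, f ∈ q) (hG : ∀ g ∈ G, g ∉ q) :
    ∃ y : Fin n → k, (∀ f ∈ J, eval y f = 0) ∧
      (∀ f ∈ F, eval y f = 0) ∧ ∀ g ∈ G, eval y g ≠ 0 := by
  set g : MvPolynomial (Fin n) k := ∏ p ∈ G, p with hg
  have hgq : g ∉ q := by
    intro h
    obtain ⟨p, hpG, hpq⟩ := (haveI := hq; Ideal.IsPrime.prod_mem_iff.mp h)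
    exact hG p hpG hpq
  -- g does not vanish on all of zeroLocus q
  have : ¬ ∀ y ∈ zeroLocus k q, eval y g = 0 := by
    intro h
    have : g ∈ vanishingIdeal k (zeroLocus k q) := mem_vanishingIdeal_iff.mpr h
    rw [vanishingIdeal_zeroLocus_eq_radical, hq.radical] at this
    exact hgq this
  push_neg at this
  obtain ⟨y, hyq, hyg⟩ := this
  refine ⟨y, fun f hf => mem_zeroLocus_iff.mp hyq f (hJq hf),
    fun f hf => mem_zeroLocus_iff.mp hyq f (hF f hf), fun p hp h0 => hyg ?_⟩
  rw [hg, map_prod]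
  exact Finset.prod_eq_zero hp h0
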